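/- Let R be a Noetherian ring and M a finite R-module satisfying Serre's condition S2. Let p ∈ Supp M be a prime with dim M_p ≥ 2 (i.e., p has codimension ≥ 2 in Supp M). Then for every prime q ⊆ p that is minimal in Supp M, the height of p/q in R/q is ≥ 2. In other words, the support of a finite S2 module satisfies codimension-1 purity: a point of codimension 1 in some irreducible component of the support has codimension 1 in the support. -/

import Mathlib

universe u

/-- `depthGE R J M n` : there is a weakly regular sequence on `M` of length `n` with entries
in `J`.  For a Noetherian local ring `R` and a finite module `M` with `J • M ≠ M` this says
exactly `depth_J M ≥ n` (and the zero module has depth `+∞`, so `depthGE` always holds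
for it, matching the usual convention). -/
def depthGE (R : Type u) [CommRing R] (J : Ideal R)
    (M : Type u) [AddCommGroup M] [Module R M] (n : ℕ) : Prop :=
  ∃ rs : List R, rs.length = n ∧ (∀ r ∈ rs, r ∈ J) ∧
    RingTheory.Sequence.IsWeaklyRegular M rs

/-- The (Krull) dimension of a module: `dim (R / ann M)`. -/
noncomputable def moduleKrullDim (R : Type u) [CommRing R]
    (M : Type u) [AddCommGroup M] [Module R M] : WithBot ℕ∞ :=
  ringKrullDim (R ⧸ Module.annihilator R M)

/-- Serre's condition `S2` for a finite module over a Noetherian ring: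
`depth_{R_p} M_p ≥ min (2, dim M_p)` for every prime `p` in the support of `M`. -/
def IsS2 (R : Type u) [CommRing R] (M : Type u) [AddCommGroup M] [Module R M] : Prop :=
  ∀ p ∈ Module.support R M, ∀ n : ℕ,
    (n : WithBot ℕ∞) ≤ min 2 (moduleKrullDim (Localization.AtPrime p.asIdeal)
        (LocalizedModule p.asIdeal.primeCompl M)) →
      depthGE (Localization.AtPrime p.asIdeal)
        (IsLocalRing.maximalIdeal (Localization.AtPrime p.asIdeal))
        (LocalizedModule p.asIdeal.primeCompl M) n

open Pointwise

open IsLocalRing in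
/-- Core local algebra lemma: over a Noetherian local ring, if `Q` is a prime which is
minimal over the annihilator of a finite module `N` admitting a length-2 regular sequence
`a, b` in the maximal ideal, and `N` is not `Q⁻`-torsion, then there is a prime strictly
between `Q` and the maximal ideal. -/
lemma core_s2 {S : Type u} [CommRing S] [IsNoetherianRing S] [IsLocalRing S]
    {N : Type u} [AddCommGroup N] [Module S N] [Module.Finite S N]
    {Q : Ideal S} (hQ : Q.IsPrime)
    (hQmin : ∀ P : Ideal S, P.IsPrime → Module.annihilator S N ≤ P → P ≤ Q → P = Q)
    {a b : S} (ha : a ∈ maximalIdeal S) (hb : b ∈ maximalIdeal S)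
    (hra : IsSMulRegular N a) (hrb : IsSMulRegular (QuotSMulTop a N) b)
    (hnt : ∃ n : N, ∀ s ∉ Q, s • n ≠ 0) :
    ∃ P : Ideal S, P.IsPrime ∧ Q < P ∧ P < maximalIdeal S := by
  classical
  -- the `Q`-torsion submodule
  let T' : Submodule S N :=
    { carrier := {n : N | ∃ s, s ∉ Q ∧ s • n = 0}
      add_mem' := by
        rintro x y ⟨s, hs, hsx⟩ ⟨t, ht, hty⟩
        refine ⟨s * t, fun h => (hQ.mem_or_mem h).elim hs ht, ?_⟩
        have h1 : (s * t) • x = 0 := by rw [mul_comm, mul_smul, hsx, smul_zero]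
        have h2 : (s * t) • y = 0 := by rw [mul_smul, hty, smul_zero]
        rw [smul_add, h1, h2, add_zero]
      zero_mem' := ⟨1, fun h => hQ.ne_top (Ideal.eq_top_of_isUnit_mem _ h isUnit_one), smul_zero 1⟩
      smul_mem' := by
        rintro c x ⟨s, hs, hsx⟩
        exact ⟨s, hs, by rw [smul_comm, hsx, smul_zero]⟩ }
  obtain ⟨n₁, hn₁⟩ := hnt
  have hn₁T' : n₁ ∉ T' := by rintro ⟨s, hs, h0⟩; exact hn₁ s hs h0
  have hT'top : T' ≠ ⊤ := fun h => hn₁T' (h ▸ Submodule.mem_top)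
  haveI : Nontrivial (N ⧸ T') :=
    ⟨⟨Submodule.Quotient.mk n₁, 0, fun h => hn₁T' ((Submodule.Quotient.mk_eq_zero _).mp h)⟩⟩
  obtain ⟨P₀, hP₀⟩ := associatedPrimes.nonempty S (N ⧸ T')
  have hP₀p : P₀.IsPrime := hP₀.1
  obtain ⟨y, hP₀y⟩ := (isAssociatedPrime_iff.mp (AssociatedPrimes.mem_iff.mp hP₀)).2
  rw [Submodule.bot_colon'] at hP₀y
  have hy0 : y ≠ 0 := by
    rintro rfl
    apply hP₀p.ne_top
    rw [hP₀y, Submodule.span_singleton_eq_bot.mpr rfl, Submodule.annihilator_bot]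
  obtain ⟨n, rfl⟩ := Submodule.Quotient.mk_surjective T' y
  have hQn : ∀ x ∈ P₀, x • n ∈ T' := by
    intro x hx
    have h1 : x • (Submodule.Quotient.mk n : N ⧸ T') = 0 :=
      (Submodule.mem_annihilator_span_singleton _ _).mp (hP₀y ▸ hx)
    rwa [← Submodule.Quotient.mk_smul, Submodule.Quotient.mk_eq_zero] at h1
  have hnT' : n ∉ T' := fun h => hy0 ((Submodule.Quotient.mk_eq_zero _).mpr h)
  have hP₀Q : P₀ ≤ Q := by
    intro x hx
    by_contra hxQ
    obtain ⟨s, hs, hsx⟩ := hQn x hx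
    exact hnT' ⟨s * x, fun h => (hQ.mem_or_mem h).elim hs hxQ, by rw [mul_smul]; exact hsx⟩
  have hannP₀ : Module.annihilator S N ≤ P₀ := by
    intro x hx
    rw [hP₀y, Submodule.mem_annihilator_span_singleton, ← Submodule.Quotient.mk_smul,
      Module.mem_annihilator.mp hx n, Submodule.Quotient.mk_zero]
  have hP₀eq : P₀ = Q := hQmin P₀ hP₀p hannP₀ hP₀Q
  rw [hP₀eq] at hQn
  -- lift to an element of `N` annihilated by `Q`
  obtain ⟨F, hF⟩ : Q.FG := IsNoetherian.noetherian Q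
  have hxQ : ∀ x ∈ F, x • n ∈ T' := fun x hx => hQn x (hF ▸ Ideal.subset_span hx)
  choose g hg hg0 using fun x : {x // x ∈ F} => hxQ x.1 x.2
  set u : S := ∏ x ∈ F.attach, g x with hu
  have huQ : u ∉ Q := fun h => by
    have : u ∈ Q.primeCompl := Submonoid.prod_mem _ (fun x _ => hg x)
    exact this h
  set m : N := u • n with hm
  have hxm : ∀ x ∈ F, x • m = 0 := by
    intro x hx
    have h1 : g ⟨x, hx⟩ * ∏ y ∈ F.attach.erase ⟨x, hx⟩, g y = u :=
      Finset.mul_prod_erase F.attach g (Finset.mem_attach F ⟨x, hx⟩)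
    have h2 : x * u = (∏ y ∈ F.attach.erase ⟨x, hx⟩, g y) * (g ⟨x, hx⟩ * x) := by
      rw [← h1]; ring
    rw [hm, ← mul_smul, h2, mul_smul, mul_smul, hg0 ⟨x, hx⟩, smul_zero]
  have hQm : Q ≤ (Submodule.span S {m}).annihilator := by
    rw [← hF, Ideal.span_le]
    intro x hx
    exact (Submodule.mem_annihilator_span_singleton _ _).mpr (hxm x hx)
  have hmT' : m ∉ T' := by
    rintro ⟨v, hv, hvm⟩
    refine hnT' ⟨v * u, fun h => (hQ.mem_or_mem h).elim hv huQ, ?_⟩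
    rw [mul_smul]; exact hvm
  have hm0 : m ≠ 0 := fun h => hmT' (by rw [h]; exact T'.zero_mem)
  -- Nakayama: some element annihilated by `Q` lies outside `a • N`
  set T : Submodule S N := Submodule.torsionBySet S N (Q : Set S) with hT
  have hmT : m ∈ T := (Submodule.mem_torsionBySet_iff _ _).mpr
    (fun x => (Submodule.mem_annihilator_span_singleton _ _).mp (hQm x.2))
  obtain ⟨m₀, hm₀T, hm₀a⟩ : ∃ m₀ ∈ T, m₀ ∉ (a • ⊤ : Submodule S N) := by
    by_contra hcon
    push_neg at hcon
    have hle : T ≤ Ideal.span {a} • T := by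
      intro n₂ hn₂
      have : n₂ ∈ a • (⊤ : Set N) := by
        have := hcon n₂ hn₂
        rwa [← SetLike.mem_coe, Submodule.coe_pointwise_smul] at this
      obtain ⟨n₃, -, rfl⟩ := this
      have hn₃ : n₃ ∈ T := (Submodule.mem_torsionBySet_iff _ _).mpr (fun x => by
        have h1 : (x : S) • a • n₃ = 0 := (Submodule.mem_torsionBySet_iff _ _).mp hn₂ x
        apply hra
        show a • ((x : S) • n₃) = a • (0 : N)
        rw [smul_zero, smul_comm]; exact h1)
      exact Submodule.smul_mem_smul (Submodule.mem_span_singleton_self a) hn₃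
    have hbot : T = ⊥ := Submodule.eq_bot_of_le_smul_of_le_jacobson_bot (Ideal.span {a}) T
      (IsNoetherian.noetherian T) hle
      (by rw [IsLocalRing.jacobson_eq_maximalIdeal (⊥ : Ideal S) bot_ne_top]
          exact Ideal.span_le.mpr (Set.singleton_subset_iff.mpr ha))
    rw [hbot] at hmT
    exact hm0 hmT
  -- pass to `N / aN` and pick an associated prime over the annihilator of `m₀`
  have hmk0 : (Submodule.Quotient.mk m₀ : QuotSMulTop a N) ≠ 0 :=
    fun h => hm₀a ((Submodule.Quotient.mk_eq_zero _).mp h)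
  obtain ⟨P, hP, hPle⟩ :=
    exists_le_isAssociatedPrime_of_isNoetherianRing S (Submodule.Quotient.mk m₀ : QuotSMulTop a N) hmk0
  rw [Submodule.bot_colon'] at hPle
  have hPp : P.IsPrime := hP.1
  have hQP : Q ≤ P := by
    intro x hx
    apply hPle
    rw [Submodule.mem_annihilator_span_singleton, ← Submodule.Quotient.mk_smul,
      (Submodule.mem_torsionBySet_iff _ _).mp hm₀T ⟨x, hx⟩, Submodule.Quotient.mk_zero]
  have haP : a ∈ P := by
    apply hPle
    rw [Submodule.mem_annihilator_span_singleton, ← Submodule.Quotient.mk_smul,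
      Submodule.Quotient.mk_eq_zero]
    exact Submodule.smul_mem_pointwise_smul m₀ a ⊤ Submodule.mem_top
  have hbP : b ∉ P := by
    obtain ⟨z, hz⟩ := (isAssociatedPrime_iff.mp hP).2
    rw [Submodule.bot_colon'] at hz
    intro hb'
    have hz0 : z ≠ 0 := by
      rintro rfl
      apply hPp.ne_top
      rw [hz, Submodule.span_singleton_eq_bot.mpr rfl, Submodule.annihilator_bot]
    have hbz : b • z = 0 := (Submodule.mem_annihilator_span_singleton _ _).mp (hz ▸ hb')
    exact hz0 (hrb (hbz.trans (smul_zero b).symm))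
  have haQ : a ∉ Q := fun h => hm0 (hra
    (((Submodule.mem_annihilator_span_singleton _ _).mp (hQm h)).trans (smul_zero a).symm))
  refine ⟨P, hPp, lt_of_le_of_ne hQP (fun h => haQ (by rw [h]; exact haP)),
    lt_of_le_of_ne (IsLocalRing.le_maximalIdeal hPp.ne_top) (fun h => hbP (by rw [h]; exact hb))⟩


/-- **Codimension-1 purity of the support of an `S2` module.**
Let `R` be a Noetherian ring and `M` a finite `R`-module satisfying Serre's condition `S2`.
Let `p ∈ Supp M` be a prime with `dim M_p ≥ 2` (codimension ≥ 2 in `Supp M`).  Then for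
every prime `q ⊆ p` minimal in `Supp M`, the height of `p/q` in `R/q` is ≥ 2; i.e. a point
of codimension 1 in some irreducible component of `Supp M` has codimension 1 in `Supp M`. -/
theorem codim_one_purity_of_isS2
    (R : Type u) [CommRing R] [IsNoetherianRing R]
    (M : Type u) [AddCommGroup M] [Module R M] [Module.Finite R M]
    (hS2 : IsS2 R M)
    (p : PrimeSpectrum R) (hp : p ∈ Module.support R M)
    (hdim : (2 : WithBot ℕ∞) ≤ moduleKrullDim (Localization.AtPrime p.asIdeal)
      (LocalizedModule p.asIdeal.primeCompl M))
    (q : PrimeSpectrum R) (hq : q ∈ Module.support R M) (hqp : q.asIdeal ≤ p.asIdeal)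
    (hmin : ∀ r ∈ Module.support R M, r.asIdeal ≤ q.asIdeal → r.asIdeal = q.asIdeal) :
    2 ≤ Order.height
      (⟨Ideal.map (Ideal.Quotient.mk q.asIdeal) p.asIdeal,
        Ideal.map_isPrime_of_surjective Ideal.Quotient.mk_surjective
          (by rw [Ideal.mk_ker]; exact hqp)⟩ : PrimeSpectrum (R ⧸ q.asIdeal)) := by
  classical
  haveI hqP : q.asIdeal.IsPrime := q.2
  haveI hpP : p.asIdeal.IsPrime := p.2
  set S := Localization.AtPrime p.asIdeal with hSdef
  set N := LocalizedModule p.asIdeal.primeCompl M with hNdef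
  haveI : IsNoetherianRing S :=
    IsLocalization.isNoetherianRing p.asIdeal.primeCompl S inferInstance
  haveI : Module.Finite S N :=
    Module.Finite.of_isLocalizedModule p.asIdeal.primeCompl
      (LocalizedModule.mkLinearMap p.asIdeal.primeCompl M)
  have hdisj : Disjoint (p.asIdeal.primeCompl : Set R) (q.asIdeal : Set R) :=
    Set.disjoint_left.mpr fun x hx hxq => hx (hqp hxq)
  set Q : Ideal S := Ideal.map (algebraMap R S) q.asIdeal with hQdef
  have hQp : Q.IsPrime :=
    IsLocalization.isPrime_of_isPrime_disjoint p.asIdeal.primeCompl S q.asIdeal q.2 hdisj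
  have hcomapQ : Q.comap (algebraMap R S) = q.asIdeal :=
    IsLocalization.under_map_of_isPrime_disjoint p.asIdeal.primeCompl S q.2 hdisj
  -- extract the regular sequence of length 2
  have hmin2 : (((2 : ℕ) : WithBot ℕ∞)) ≤ min 2 (moduleKrullDim S N) :=
    le_min (by norm_num) (by exact_mod_cast hdim)
  obtain ⟨rs, hlen, hmem, hreg⟩ := hS2 p hp 2 hmin2
  obtain ⟨a, b, rfl⟩ := List.length_eq_two.mp hlen
  rw [RingTheory.Sequence.isWeaklyRegular_cons_iff] at hreg
  obtain ⟨hra, hreg2⟩ := hreg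
  rw [RingTheory.Sequence.isWeaklyRegular_cons_iff] at hreg2
  obtain ⟨hrb, -⟩ := hreg2
  have ha : a ∈ IsLocalRing.maximalIdeal S := hmem a (by simp)
  have hb : b ∈ IsLocalRing.maximalIdeal S := hmem b (by simp)
  -- `N` is not entirely `Qᶜ`-torsion
  have hnt : ∃ n : N, ∀ s ∉ Q, s • n ≠ 0 := by
    by_contra hcon
    push_neg at hcon
    apply Module.notMem_support_iff'.mpr ?_ hq
    intro m
    obtain ⟨s, hsQ, hs0⟩ := hcon (LocalizedModule.mk m 1)
    obtain ⟨⟨x, t⟩, hxt⟩ := IsLocalization.mk'_surjective p.asIdeal.primeCompl s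
    have hfx : algebraMap R S ↑t * s = algebraMap R S x := by
      rw [mul_comm, ← hxt]; exact IsLocalization.mk'_spec S x t
    have h2 : (x • LocalizedModule.mk m (1 : p.asIdeal.primeCompl) : N) = 0 := by
      rw [← algebraMap_smul S x, ← hfx, mul_smul, hs0, smul_zero]
    rw [LocalizedModule.smul'_mk] at h2
    have h3 : ∃ u : p.asIdeal.primeCompl, (u : R) • (x • m) = 0 := by
      rw [show (0 : N) = LocalizedModule.mk 0 1 from (LocalizedModule.zero_mk (1 : p.asIdeal.primeCompl)).symm,
        LocalizedModule.mk_eq] at h2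
      obtain ⟨u, hu⟩ := h2
      refine ⟨u, ?_⟩
      simpa [Submonoid.smul_def] using hu
    have hx_q : x ∉ q.asIdeal := by
      intro hxq
      have hfxQ : algebraMap R S ↑t * s ∈ Q := by
        rw [hfx]
        rw [← hcomapQ] at hxq
        exact hxq
      rcases hQp.mem_or_mem hfxQ with h | h
      · exact t.2 (hqp (hcomapQ ▸ h))
      · exact hsQ h
    obtain ⟨u, hu⟩ := h3
    refine ⟨(u : R) * x, fun hmem' => ?_, by rw [mul_smul]; exact hu⟩
    rcases hqP.mem_or_mem hmem' with h | h
    · exact u.2 (hqp h)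
    · exact hx_q h
  -- minimality hypothesis transferred to `S`
  have hannf : ∀ x ∈ Module.annihilator R M, algebraMap R S x ∈ Module.annihilator S N := by
    intro x hx
    rw [Module.mem_annihilator]
    intro n
    induction n using LocalizedModule.induction_on with
    | h m t =>
      rw [algebraMap_smul, LocalizedModule.smul'_mk, Module.mem_annihilator.mp hx m,
        LocalizedModule.zero_mk]
  have hQmin : ∀ P : Ideal S, P.IsPrime → Module.annihilator S N ≤ P → P ≤ Q → P = Q := by
    intro P hPp hPann hPQ
    haveI := hPp
    have hrsupp : (⟨P.comap (algebraMap R S), hPp.comap _⟩ : PrimeSpectrum R)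
        ∈ Module.support R M := by
      rw [Module.mem_support_iff_of_finite]
      exact fun x hx => hPann (hannf x hx)
    have hle : P.comap (algebraMap R S) ≤ q.asIdeal := hcomapQ ▸ Ideal.comap_mono hPQ
    have heq : P.comap (algebraMap R S) = q.asIdeal := hmin _ hrsupp hle
    calc P = Ideal.map (algebraMap R S) (P.comap (algebraMap R S)) :=
          (IsLocalization.map_comap p.asIdeal.primeCompl S P).symm
      _ = Q := by rw [heq]
  obtain ⟨P, hPp, hQP, hPm⟩ := core_s2 hQp hQmin ha hb hra hrb hnt
  haveI := hPp
  -- transfer the chain `Q < P < 𝔪` back to `R`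
  have hqr : q.asIdeal < P.comap (algebraMap R S) := by
    have hq1 : Q.comap (algebraMap R S) < P.comap (algebraMap R S) := by
      refine lt_of_le_of_ne (Ideal.comap_mono hQP.le) (fun h => hQP.ne ?_)
      rw [← IsLocalization.map_comap p.asIdeal.primeCompl S Q,
        ← IsLocalization.map_comap p.asIdeal.primeCompl S P]
      exact congrArg (Ideal.map (algebraMap R S)) h
    rw [hcomapQ] at hq1
    exact hq1
  have hr'p : P.comap (algebraMap R S) < p.asIdeal := by
    have hcm : (IsLocalRing.maximalIdeal S).comap (algebraMap R S) = p.asIdeal :=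
      IsLocalization.AtPrime.comap_maximalIdeal S p.asIdeal
    have hq1 : P.comap (algebraMap R S) < (IsLocalRing.maximalIdeal S).comap (algebraMap R S) := by
      refine lt_of_le_of_ne (Ideal.comap_mono hPm.le) (fun h => hPm.ne ?_)
      rw [← IsLocalization.map_comap p.asIdeal.primeCompl S P,
        ← IsLocalization.map_comap p.asIdeal.primeCompl S (IsLocalRing.maximalIdeal S)]
      exact congrArg (Ideal.map (algebraMap R S)) h
    rw [hcm] at hq1
    exact hq1
  haveI hr'P : (P.comap (algebraMap R S)).IsPrime := hPp.comap _
  -- build the chain in `R ⧸ q`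
  have hsurj : Function.Surjective (Ideal.Quotient.mk q.asIdeal) := Ideal.Quotient.mk_surjective
  have hker : RingHom.ker (Ideal.Quotient.mk q.asIdeal) = q.asIdeal := Ideal.mk_ker
  have hmaplt : ∀ I J : Ideal R, ∀ _ : I.IsPrime, ∀ _ : J.IsPrime, q.asIdeal ≤ I → I < J →
      Ideal.map (Ideal.Quotient.mk q.asIdeal) I < Ideal.map (Ideal.Quotient.mk q.asIdeal) J := by
    intro I J _ _ hI hIJ
    refine lt_of_le_of_ne (Ideal.map_mono hIJ.le) fun h => hIJ.ne ?_
    have h1 : ∀ K : Ideal R, q.asIdeal ≤ K →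
        (Ideal.map (Ideal.Quotient.mk q.asIdeal) K).comap (Ideal.Quotient.mk q.asIdeal) = K := by
      intro K hK
      rw [Ideal.comap_map_of_surjective _ hsurj, ← RingHom.ker_eq_comap_bot, hker,
        sup_eq_left.mpr hK]
    rw [← h1 I hI, ← h1 J (hI.trans hIJ.le), h]
  let A : PrimeSpectrum (R ⧸ q.asIdeal) :=
    ⟨Ideal.map (Ideal.Quotient.mk q.asIdeal) q.asIdeal,
      Ideal.map_isPrime_of_surjective hsurj (by rw [hker])⟩
  let B : PrimeSpectrum (R ⧸ q.asIdeal) :=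
    ⟨Ideal.map (Ideal.Quotient.mk q.asIdeal) (P.comap (algebraMap R S)),
      Ideal.map_isPrime_of_surjective hsurj (by rw [hker]; exact hqr.le)⟩
  let C : PrimeSpectrum (R ⧸ q.asIdeal) :=
    ⟨Ideal.map (Ideal.Quotient.mk q.asIdeal) p.asIdeal,
      Ideal.map_isPrime_of_surjective hsurj (by rw [hker]; exact hqp)⟩
  have hAB : A < B := by
    rw [← PrimeSpectrum.asIdeal_lt_asIdeal]
    exact hmaplt _ _ q.2 hr'P le_rfl hqr
  have hBC : B < C := by
    rw [← PrimeSpectrum.asIdeal_lt_asIdeal]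
    exact hmaplt _ _ hr'P p.2 hqr.le hr'p
  have hchain := Order.length_le_height_last
    (p := (((RelSeries.singleton _ A).snoc B hAB).snoc C (by exact hBC) : LTSeries (PrimeSpectrum (R ⧸ q.asIdeal))))
  exact hchain
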